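/- Let E ⊆ ℝ^{n+1} be bounded and satisfy a uniform ball condition, and set ‖S_E‖ = sup{|((x−y)·ν_E(x))|/|x−y|² : x, y ∈ ∂E, x ≠ y}. Then for all distinct x, y ∈ ∂E, |ν_E(x) − ν_E(y)| ≤ 2 ‖S_E‖ |x−y|. -/

import Mathlib

/-- `ν` is an outer-unit-normal field of `E` realizing the uniform ball condition with
radius `r`. -/
def UBCNormal {n : ℕ} (E : Set (EuclideanSpace ℝ (Fin (n+1)))) (r : ℝ)
    (ν : EuclideanSpace ℝ (Fin (n+1)) → EuclideanSpace ℝ (Fin (n+1))) : Prop :=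
  ∀ x ∈ frontier E, ‖ν x‖ = 1 ∧ Metric.ball (x - r • ν x) r ⊆ E ∧
    Metric.ball (x + r • ν x) r ⊆ Eᶜ

lemma midpoint_mem_balls {V : Type*} [NormedAddCommGroup V] [NormedSpace ℝ V]
    {c₁ c₂ : V} {ρ : ℝ} (h : ‖c₁ - c₂‖ < 2 * ρ) :
    ((2:ℝ)⁻¹ • (c₁ + c₂)) ∈ Metric.ball c₁ ρ ∩ Metric.ball c₂ ρ := by
  have h1 : (2:ℝ)⁻¹ • (c₁ + c₂) - c₁ = (2:ℝ)⁻¹ • (c₂ - c₁) := by module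
  have h2 : (2:ℝ)⁻¹ • (c₁ + c₂) - c₂ = (2:ℝ)⁻¹ • (c₁ - c₂) := by module
  have hn : ‖c₂ - c₁‖ = ‖c₁ - c₂‖ := norm_sub_rev _ _
  constructor <;> rw [Metric.mem_ball, dist_eq_norm]
  · rw [h1, norm_smul]
    simp only [norm_inv, Real.norm_ofNat]
    rw [hn]; linarith
  · rw [h2, norm_smul]
    simp only [norm_inv, Real.norm_ofNat]
    linarith

lemma frontier_avoid {n : ℕ} {ρ : ℝ}
    (hρ0 : 0 < ρ)
    {ν : EuclideanSpace ℝ (Fin (n+1)) → EuclideanSpace ℝ (Fin (n+1))}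
    {x : EuclideanSpace ℝ (Fin (n+1))} (hn : ‖ν x‖ = 1)
    {z : EuclideanSpace ℝ (Fin (n+1))}
    (hb : 2*ρ*|(inner ℝ (x-z) (ν x) : ℝ)| ≤ ‖x-z‖^2) :
    ρ ≤ ‖z - (x - ρ • ν x)‖ ∧ ρ ≤ ‖z - (x + ρ • ν x)‖ := by
  have e1 : z - (x - ρ • ν x) = (z - x) + ρ • ν x := by module
  have e2 : z - (x + ρ • ν x) = (z - x) - ρ • ν x := by module
  have hip : (inner ℝ (z-x) (ν x) : ℝ) = - inner ℝ (x-z) (ν x) := by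
    rw [← neg_sub x z, inner_neg_left]
  have hnn : ‖x - z‖ = ‖z - x‖ := norm_sub_rev _ _
  have habs1 : (inner ℝ (x-z) (ν x) : ℝ) ≤ |(inner ℝ (x-z) (ν x) : ℝ)| := le_abs_self _
  have habs2 : -|(inner ℝ (x-z) (ν x) : ℝ)| ≤ (inner ℝ (x-z) (ν x) : ℝ) := neg_abs_le _
  have hsm : ‖ρ • ν x‖ = ρ := by
    rw [norm_smul, hn, Real.norm_eq_abs, abs_of_pos hρ0, mul_one]
  constructor
  · refine le_of_pow_le_pow_left₀ two_ne_zero (norm_nonneg _) ?_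
    rw [e1, norm_add_sq_real, real_inner_smul_right, hsm, hip]
    nlinarith [norm_nonneg (z - x), sq_nonneg ‖z - x‖]
  · refine le_of_pow_le_pow_left₀ two_ne_zero (norm_nonneg _) ?_
    rw [e2, norm_sub_sq_real, real_inner_smul_right, hsm, hip]
    nlinarith [norm_nonneg (z - x), sq_nonneg ‖z - x‖]

lemma balls_incl {n : ℕ} {E : Set (EuclideanSpace ℝ (Fin (n+1)))} {r ρ : ℝ}
    {ν : EuclideanSpace ℝ (Fin (n+1)) → EuclideanSpace ℝ (Fin (n+1))}
    (hr : 0 < r) (hρ : r ≤ ρ) (hν : UBCNormal E r ν)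
    (hb : ∀ x ∈ frontier E, ∀ z ∈ frontier E, 2*ρ*|(inner ℝ (x-z) (ν x) : ℝ)| ≤ ‖x-z‖^2)
    {x : EuclideanSpace ℝ (Fin (n+1))} (hx : x ∈ frontier E) :
    Metric.ball (x - ρ • ν x) ρ ⊆ interior E ∧
      Metric.ball (x + ρ • ν x) ρ ⊆ (closure E)ᶜ := by
  have hρ0 : 0 < ρ := hr.trans_le hρ
  have hn : ‖ν x‖ = 1 := (hν x hx).1
  have favoid : ∀ z ∈ frontier E,
      ρ ≤ ‖z - (x - ρ • ν x)‖ ∧ ρ ≤ ‖z - (x + ρ • ν x)‖ :=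
    fun z hz => frontier_avoid hρ0 hn (hb x hx z hz)
  have hdisj : Disjoint (interior E) (closure E)ᶜ :=
    Set.disjoint_left.2 fun z hz hz' => hz' (subset_closure (interior_subset hz))
  have hrsmul : ∀ (c : ℝ), ‖c • ν x‖ = |c| := by
    intro c; rw [norm_smul, hn, Real.norm_eq_abs, mul_one]
  constructor
  · have hcover : Metric.ball (x - ρ • ν x) ρ ⊆ interior E ∪ (closure E)ᶜ := by
      intro z hzball
      by_cases hz : z ∈ closure E
      · left
        by_contra hzi
        have := (favoid z ⟨hz, hzi⟩).1
        rw [Metric.mem_ball, dist_eq_norm] at hzball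
        linarith
      · exact Or.inr hz
    refine (convex_ball _ _).isPreconnected.subset_left_of_subset_union
      isOpen_interior isClosed_closure.isOpen_compl hdisj hcover ⟨x - r • ν x, ?_, ?_⟩
    · rw [Metric.mem_ball, dist_eq_norm]
      have e : (x - r • ν x) - (x - ρ • ν x) = (ρ - r) • ν x := by module
      rw [e, hrsmul, abs_of_nonneg (by linarith)]
      linarith
    · exact (Metric.isOpen_ball.subset_interior_iff.2 (hν x hx).2.1)
        (Metric.mem_ball_self hr)
  · have hcover : Metric.ball (x + ρ • ν x) ρ ⊆ (closure E)ᶜ ∪ interior E := by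
      intro z hzball
      by_cases hz : z ∈ closure E
      · right
        by_contra hzi
        have := (favoid z ⟨hz, hzi⟩).2
        rw [Metric.mem_ball, dist_eq_norm] at hzball
        linarith
      · exact Or.inl hz
    refine (convex_ball _ _).isPreconnected.subset_left_of_subset_union
      isClosed_closure.isOpen_compl isOpen_interior hdisj.symm hcover
      ⟨x + r • ν x, ?_, ?_⟩
    · rw [Metric.mem_ball, dist_eq_norm]
      have e : (x + r • ν x) - (x + ρ • ν x) = (r - ρ) • ν x := by module
      rw [e, hrsmul, abs_of_nonpos (by linarith), neg_sub]
      linarith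
    · have : Metric.ball (x + r • ν x) r ⊆ interior Eᶜ :=
        Metric.isOpen_ball.subset_interior_iff.2 (hν x hx).2.2
      rw [interior_compl] at this
      exact this (Metric.mem_ball_self hr)
lemma main_est {n : ℕ} {E : Set (EuclideanSpace ℝ (Fin (n+1)))} {r ρ : ℝ}
    {ν : EuclideanSpace ℝ (Fin (n+1)) → EuclideanSpace ℝ (Fin (n+1))}
    (hr : 0 < r) (hρ : r ≤ ρ) (hν : UBCNormal E r ν)
    (hb : ∀ x ∈ frontier E, ∀ z ∈ frontier E, 2*ρ*|(inner ℝ (x-z) (ν x) : ℝ)| ≤ ‖x-z‖^2)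
    {x y : EuclideanSpace ℝ (Fin (n+1))} (hx : x ∈ frontier E) (hy : y ∈ frontier E) :
    ρ * ‖ν x - ν y‖ ≤ ‖x - y‖ := by
  have hρ0 : 0 < ρ := hr.trans_le hρ
  have hdist : ∀ x' ∈ frontier E, ∀ y' ∈ frontier E,
      2*ρ ≤ ‖(x' - ρ • ν x') - (y' + ρ • ν y')‖ := by
    intro x' hx' y' hy'
    by_contra h
    push_neg at h
    obtain ⟨hm1, hm2⟩ := midpoint_mem_balls h
    exact (balls_incl hr hρ hν hb hy').2 hm2
      (subset_closure (interior_subset ((balls_incl hr hρ hν hb hx').1 hm1)))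
  have h1 := hdist x hx y hy
  have h2 := hdist y hy x hx
  have hnx : ‖ν x‖ = 1 := (hν x hx).1
  have hny : ‖ν y‖ = 1 := (hν y hy).1
  have e1 : (x - ρ • ν x) - (y + ρ • ν y) = (x - y) - ρ • (ν x + ν y) := by module
  have e2 : (y - ρ • ν y) - (x + ρ • ν x) = -((x - y) + ρ • (ν x + ν y)) := by module
  rw [e1] at h1
  rw [e2, norm_neg] at h2
  have hsq1 : (2*ρ)^2 ≤ ‖(x - y) - ρ • (ν x + ν y)‖^2 := by
    apply pow_le_pow_left₀ (by linarith) h1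
  have hsq2 : (2*ρ)^2 ≤ ‖(x - y) + ρ • (ν x + ν y)‖^2 := by
    apply pow_le_pow_left₀ (by linarith) h2
  rw [norm_sub_sq_real] at hsq1
  rw [norm_add_sq_real] at hsq2
  have hw : ‖ρ • (ν x + ν y)‖^2 = ρ^2 * ‖ν x + ν y‖^2 := by
    rw [norm_smul, Real.norm_eq_abs, mul_pow, sq_abs]
  have hpar : ‖ν x + ν y‖^2 + ‖ν x - ν y‖^2 = 4 := by
    rw [norm_add_sq_real, norm_sub_sq_real, hnx, hny]; ring
  have key : ρ^2 * ‖ν x - ν y‖^2 ≤ ‖x - y‖^2 := by nlinarith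
  have : (ρ * ‖ν x - ν y‖)^2 ≤ ‖x - y‖^2 := by rw [mul_pow]; nlinarith
  exact le_of_pow_le_pow_left₀ two_ne_zero (norm_nonneg _) this

lemma avoid_to_bound {n : ℕ} {ρ : ℝ} (hρ0 : 0 < ρ)
    {ν : EuclideanSpace ℝ (Fin (n+1)) → EuclideanSpace ℝ (Fin (n+1))}
    {x z : EuclideanSpace ℝ (Fin (n+1))} (hn : ‖ν x‖ = 1)
    (h1 : ρ ≤ ‖z - (x - ρ • ν x)‖) (h2 : ρ ≤ ‖z - (x + ρ • ν x)‖) :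
    2*ρ*|(inner ℝ (x-z) (ν x) : ℝ)| ≤ ‖x-z‖^2 := by
  have e1 : z - (x - ρ • ν x) = (z - x) + ρ • ν x := by module
  have e2 : z - (x + ρ • ν x) = (z - x) - ρ • ν x := by module
  have hip : (inner ℝ (z-x) (ν x) : ℝ) = - inner ℝ (x-z) (ν x) := by
    rw [← neg_sub x z, inner_neg_left]
  have hnn : ‖x - z‖ = ‖z - x‖ := norm_sub_rev _ _
  have hsm : ‖ρ • ν x‖ = ρ := by
    rw [norm_smul, hn, Real.norm_eq_abs, abs_of_pos hρ0, mul_one]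
  have hsq1 : ρ^2 ≤ ‖(z - x) + ρ • ν x‖^2 := by
    apply pow_le_pow_left₀ hρ0.le; rw [← e1]; exact h1
  have hsq2 : ρ^2 ≤ ‖(z - x) - ρ • ν x‖^2 := by
    apply pow_le_pow_left₀ hρ0.le; rw [← e2]; exact h2
  rw [norm_add_sq_real, real_inner_smul_right, hsm, hip] at hsq1
  rw [norm_sub_sq_real, real_inner_smul_right, hsm, hip] at hsq2
  have hnn2 : ‖x-z‖^2 = ‖z-x‖^2 := by rw [hnn]
  have habs : |2*ρ*(inner ℝ (x-z) (ν x) : ℝ)| ≤ ‖x-z‖^2 := by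
    rw [abs_le]; constructor <;> linarith [hnn2]
  calc 2*ρ*|(inner ℝ (x-z) (ν x) : ℝ)| = |2*ρ*(inner ℝ (x-z) (ν x) : ℝ)| := by
        rw [abs_mul, abs_of_pos (by linarith : (0:ℝ) < 2*ρ)]
    _ ≤ ‖x-z‖^2 := habs

/-- For a bounded set `E` satisfying a uniform ball condition, with
`‖S_E‖ = sup{|((x−y)·ν_E(x))|/|x−y|² : x ≠ y ∈ ∂E}`, the outer unit normal satisfies
`|ν_E(x) − ν_E(y)| ≤ 2 ‖S_E‖ |x−y|` for all distinct `x, y ∈ ∂E`. -/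
theorem normal_lipschitz_two_point {n : ℕ} (E : Set (EuclideanSpace ℝ (Fin (n+1))))
    (hbd : Bornology.IsBounded E) (r : ℝ) (hr : 0 < r)
    (ν : EuclideanSpace ℝ (Fin (n+1)) → EuclideanSpace ℝ (Fin (n+1)))
    (hν : UBCNormal E r ν) :
    ∀ x ∈ frontier E, ∀ y ∈ frontier E, x ≠ y →
      ‖ν x - ν y‖ ≤ 2 * sSup {s : ℝ | ∃ x' ∈ frontier E, ∃ y' ∈ frontier E, x' ≠ y' ∧
          s = |(inner ℝ (x' - y') (ν x') : ℝ)| / ‖x' - y'‖ ^ 2} * ‖x - y‖ := by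
  intro x hx y hy hxy
  set S : ℝ := sSup {s : ℝ | ∃ x' ∈ frontier E, ∃ y' ∈ frontier E, x' ≠ y' ∧
      s = |(inner ℝ (x' - y') (ν x') : ℝ)| / ‖x' - y'‖ ^ 2} with hSdef
  -- key bound with radius r
  have hkey : ∀ x' ∈ frontier E, ∀ z ∈ frontier E,
      2*r*|(inner ℝ (x'-z) (ν x') : ℝ)| ≤ ‖x'-z‖^2 := by
    intro x' hx' z hz
    have hball1 : Metric.ball (x' - r • ν x') r ⊆ interior E :=
      Metric.isOpen_ball.subset_interior_iff.2 (hν x' hx').2.1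
    have hball2 : Metric.ball (x' + r • ν x') r ⊆ (closure E)ᶜ := by
      have : Metric.ball (x' + r • ν x') r ⊆ interior Eᶜ :=
        Metric.isOpen_ball.subset_interior_iff.2 (hν x' hx').2.2
      rwa [interior_compl] at this
    have h1 : r ≤ ‖z - (x' - r • ν x')‖ := by
      by_contra h
      push_neg at h
      exact hz.2 (hball1 (by rwa [Metric.mem_ball, dist_eq_norm]))
    have h2 : r ≤ ‖z - (x' + r • ν x')‖ := by
      by_contra h
      push_neg at h
      exact (hball2 (by rwa [Metric.mem_ball, dist_eq_norm])) hz.1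
    exact avoid_to_bound hr (hν x' hx').1 h1 h2
  have hne : Set.Nonempty {s : ℝ | ∃ x' ∈ frontier E, ∃ y' ∈ frontier E, x' ≠ y' ∧
      s = |(inner ℝ (x' - y') (ν x') : ℝ)| / ‖x' - y'‖ ^ 2} :=
    ⟨_, x, hx, y, hy, hxy, rfl⟩
  have hub : ∀ s ∈ {s : ℝ | ∃ x' ∈ frontier E, ∃ y' ∈ frontier E, x' ≠ y' ∧
      s = |(inner ℝ (x' - y') (ν x') : ℝ)| / ‖x' - y'‖ ^ 2}, s ≤ 1/(2*r) := by
    rintro s ⟨x', hx', y', hy', hne', rfl⟩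
    have hpos : 0 < ‖x' - y'‖ := norm_sub_pos_iff.2 hne'
    rw [div_le_div_iff₀ (by positivity) (by positivity)]
    have := hkey x' hx' y' hy'
    nlinarith
  have hbdd : BddAbove {s : ℝ | ∃ x' ∈ frontier E, ∃ y' ∈ frontier E, x' ≠ y' ∧
      s = |(inner ℝ (x' - y') (ν x') : ℝ)| / ‖x' - y'‖ ^ 2} := ⟨1/(2*r), hub⟩
  have hSnn : 0 ≤ S := le_trans (by positivity) (le_csSup hbdd ⟨x, hx, y, hy, hxy, rfl⟩)
  have hS_ub : ∀ x' ∈ frontier E, ∀ z ∈ frontier E,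
      |(inner ℝ (x'-z) (ν x') : ℝ)| ≤ S * ‖x'-z‖^2 := by
    intro x' hx' z hz
    by_cases h : x' = z
    · subst h
      simp only [sub_self, inner_zero_left, abs_zero, norm_zero]
      positivity
    · have hpos : 0 < ‖x' - z‖ := norm_sub_pos_iff.2 h
      have hmem := le_csSup hbdd (⟨x', hx', z, hz, h, rfl⟩ : _ ∈ {s : ℝ | ∃ x' ∈ frontier E,
        ∃ y' ∈ frontier E, x' ≠ y' ∧ s = |(inner ℝ (x' - y') (ν x') : ℝ)| / ‖x' - y'‖ ^ 2})
      rw [← hSdef] at hmem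
      rw [div_le_iff₀ (by positivity)] at hmem
      linarith [hmem]
  rcases hSnn.lt_or_eq with hpos | heq
  · -- S > 0; use ρ = (2S)⁻¹
    have hinv : (2*S)⁻¹ * (2*S) = 1 := inv_mul_cancel₀ (by positivity)
    have hSle : S ≤ 1/(2*r) := csSup_le hne hub
    have h2rS : 2*r*S ≤ 1 := by
      rw [le_div_iff₀ (by positivity)] at hSle; nlinarith
    have hρr : r ≤ (2*S)⁻¹ := by nlinarith
    have hb : ∀ x' ∈ frontier E, ∀ z ∈ frontier E,
        2*(2*S)⁻¹*|(inner ℝ (x'-z) (ν x') : ℝ)| ≤ ‖x'-z‖^2 := by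
      intro x' hx' z hz
      have h := hS_ub x' hx' z hz
      have habs : 0 ≤ |(inner ℝ (x'-z) (ν x') : ℝ)| := abs_nonneg _
      nlinarith
    have hmain := main_est hr hρr hν hb hx hy
    have hrw : ‖ν x - ν y‖ = 2*S*((2*S)⁻¹*‖ν x - ν y‖) := by
      rw [← mul_assoc, mul_inv_cancel₀ (by positivity : (2*S) ≠ 0), one_mul]
    rw [hrw]
    exact mul_le_mul_of_nonneg_left hmain (by positivity)
  · -- S = 0
    have hall : ∀ ρ, r ≤ ρ → ρ * ‖ν x - ν y‖ ≤ ‖x - y‖ := by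
      intro ρ hρ
      refine main_est hr hρ hν ?_ hx hy
      intro x' hx' z hz
      have h := hS_ub x' hx' z hz
      rw [← heq, zero_mul] at h
      have : |(inner ℝ (x'-z) (ν x') : ℝ)| = 0 := le_antisymm h (abs_nonneg _)
      rw [this, mul_zero]
      positivity
    rw [← heq, mul_zero, zero_mul]
    by_contra h
    push_neg at h
    have hq : 0 < ‖ν x - ν y‖ := h
    have hρ1 : r ≤ max r ((‖x - y‖ + 1)/‖ν x - ν y‖) := le_max_left _ _
    have h2 := hall _ hρ1
    have hρ2 : (‖x - y‖ + 1)/‖ν x - ν y‖ ≤ max r ((‖x - y‖ + 1)/‖ν x - ν y‖) :=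
      le_max_right _ _
    have : ‖x - y‖ + 1 ≤ max r ((‖x - y‖ + 1)/‖ν x - ν y‖) * ‖ν x - ν y‖ := by
      rw [div_le_iff₀ hq] at hρ2
      exact hρ2
    linarith
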